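/- arXiv:2509.00504 — 6 statements merged into one kernel-verified Lean document; each statement's English description precedes it below -/
import Mathlib

section
/- Let M ∈ ℝⁿˣⁿ be symmetric positive definite with largest eigenvalue λ_max, let g ∈ ℝⁿ, let η = 1/λ_max, and define the dogleg path d(μ) = -ηg for μ ∈ (0,1] and d(μ) = -ηg + (μ-1)(-M⁻¹g + ηg) for μ ∈ (1,2]. Let s(x) = ⟨g,x⟩ + ½xᵀMx, so ∇s(x) = Mx + g. Then for every μ ∈ (0,2], ⟨d(μ), ∇s(d(μ))⟩ ≤ 0. -/
open scoped Matrix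

section Aux

variable {n : ℕ} [NeZero n] {M : Matrix (Fin n) (Fin n) ℝ}

private theorem dogleg_sym (hM : M.IsHermitian) (x y : Fin n → ℝ) :
    x ⬝ᵥ M.mulVec y = M.mulVec x ⬝ᵥ y := by
  have hMT : ∀ i j, M i j = M j i := fun i j => by
    simpa using congrFun (congrFun hM.eq j) i
  simp only [Matrix.mulVec, dotProduct, Finset.mul_sum, Finset.sum_mul]
  conv_rhs => rw [Finset.sum_comm]
  refine Finset.sum_congr rfl fun i _ => Finset.sum_congr rfl fun k _ => ?_
  rw [hMT i k]; ring

private theorem dogleg_parseval (hM : M.IsHermitian) (x y : Fin n → ℝ) :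
    x ⬝ᵥ y = ∑ i, ((hM.eigenvectorBasis i : Fin n → ℝ) ⬝ᵥ x) *
      ((hM.eigenvectorBasis i : Fin n → ℝ) ⬝ᵥ y) := by
  have := hM.eigenvectorBasis.sum_inner_mul_inner (WithLp.toLp 2 x : EuclideanSpace ℝ (Fin n))
    (WithLp.toLp 2 y : EuclideanSpace ℝ (Fin n))
  simp only [PiLp.inner_apply, RCLike.inner_apply, conj_trivial] at this
  simp only [dotProduct]
  rw [show ∑ i, x i * y i = ∑ i, y i * x i from
    Finset.sum_congr rfl fun i _ => mul_comm _ _, ← this]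
  exact Finset.sum_congr rfl fun i _ =>
    congrArg (_ * ·) (Finset.sum_congr rfl fun k _ => mul_comm _ _)

private theorem dogleg_coeff (hM : M.IsHermitian) (i : Fin n) (w : Fin n → ℝ) :
    (hM.eigenvectorBasis i : Fin n → ℝ) ⬝ᵥ M.mulVec w =
      hM.eigenvalues i * ((hM.eigenvectorBasis i : Fin n → ℝ) ⬝ᵥ w) := by
  rw [dogleg_sym hM]
  have h1 : M.mulVec (hM.eigenvectorBasis i : Fin n → ℝ) =
      hM.eigenvalues i • (hM.eigenvectorBasis i : Fin n → ℝ) :=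
    hM.mulVec_eigenvectorBasis i
  rw [h1]
  simp [dotProduct, PiLp.smul_apply, smul_eq_mul, Finset.mul_sum, mul_assoc]

end Aux


/-- along the dogleg path with gradient step `η = 1/λ_max`,
the descent condition `⟨d(μ), ∇s(d(μ))⟩ ≤ 0` holds for all `μ ∈ (0,2]`,
where `s(x) = ⟨g,x⟩ + ½ xᵀMx` so that `∇s(x) = Mx + g`. -/
theorem dogleg_descent_le {n : ℕ} [NeZero n]
    (M : Matrix (Fin n) (Fin n) ℝ) (hM : M.IsHermitian) (hpd : M.PosDef)
    (g : Fin n → ℝ) (η : ℝ) (hη : η = 1 / (⨆ i, hM.eigenvalues i))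
    (d : ℝ → (Fin n → ℝ))
    (hd : ∀ μ : ℝ, d μ = if μ ≤ 1 then -(η • g)
      else -(η • g) + (μ - 1) • (-(M⁻¹.mulVec g) + η • g)) :
    ∀ μ ∈ Set.Ioc (0 : ℝ) 2, d μ ⬝ᵥ (M.mulVec (d μ) + g) ≤ 0 := by
  
  set L : ℝ := ⨆ i, hM.eigenvalues i with hL
  have hle : ∀ i, hM.eigenvalues i ≤ L := fun i =>
    le_ciSup (Set.Finite.bddAbove (Set.finite_range _)) i
  have hpos : ∀ i, 0 < hM.eigenvalues i := hpd.eigenvalues_pos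
  have hLpos : 0 < L := lt_of_lt_of_le (hpos (Classical.arbitrary _)) (hle _)
  have hηpos : 0 < η := by rw [hη]; positivity
  have hηL : η * L = 1 := by rw [hη]; field_simp
  have hA : ∀ v : Fin n → ℝ, v ⬝ᵥ M.mulVec v ≤ L * (v ⬝ᵥ v) := by
    intro v
    rw [dogleg_parseval hM v (M.mulVec v), dogleg_parseval hM v v, Finset.mul_sum]
    refine Finset.sum_le_sum fun i _ => ?_
    rw [dogleg_coeff hM]
    nlinarith [hle i, sq_nonneg ((hM.eigenvectorBasis i : Fin n → ℝ) ⬝ᵥ v)]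
  have hB : ∀ v : Fin n → ℝ, M.mulVec v ⬝ᵥ M.mulVec v ≤ L * (v ⬝ᵥ M.mulVec v) := by
    intro v
    rw [dogleg_parseval hM (M.mulVec v) (M.mulVec v),
      dogleg_parseval hM v (M.mulVec v), Finset.mul_sum]
    refine Finset.sum_le_sum fun i _ => ?_
    rw [dogleg_coeff hM]
    nlinarith [hle i, hpos i, sq_nonneg ((hM.eigenvectorBasis i : Fin n → ℝ) ⬝ᵥ v)]
  have hself : ∀ v : Fin n → ℝ, 0 ≤ v ⬝ᵥ v := fun v =>
    Finset.sum_nonneg fun i _ => mul_self_nonneg _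
  intro μ hμ
  rw [hd μ]
  by_cases h1 : μ ≤ 1
  · simp only [if_pos h1]
    have hAg := hA g
    have hgg := hself g
    simp only [Matrix.mulVec_neg, Matrix.mulVec_smul, neg_dotProduct,
      dotProduct_add, dotProduct_neg, dotProduct_smul,
      smul_dotProduct, smul_eq_mul]
    have key : η * η * (L * (g ⬝ᵥ g)) = η * (g ⬝ᵥ g) := by
      rw [show η * η * (L * (g ⬝ᵥ g)) = η * L * (η * (g ⬝ᵥ g)) by ring, hηL, one_mul]
    have h2 : η * η * (g ⬝ᵥ M.mulVec g) ≤ η * η * (L * (g ⬝ᵥ g)) :=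
      mul_le_mul_of_nonneg_left hAg (by positivity)
    nlinarith
  · simp only [if_neg h1]
    push_neg at h1
    set h : Fin n → ℝ := M⁻¹.mulVec g with hh
    have := hpd.isUnit.invertible
    have hg : M.mulVec h = g := by
      rw [hh, Matrix.mulVec_mulVec, Matrix.mul_inv_of_invertible, Matrix.one_mulVec]
    set t : ℝ := μ - 1 with ht
    have ht0 : 0 < t := by simp only [ht]; linarith
    have ht1 : t ≤ 1 := by simp only [ht]; linarith [hμ.2]
    set c : ℝ := h ⬝ᵥ M.mulVec h with hc
    set e : ℝ := M.mulVec h ⬝ᵥ M.mulVec h with he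
    set k : ℝ := g ⬝ᵥ M.mulVec g with hk
    have hgg : g ⬝ᵥ g = e := by rw [← hg]
    have hhg : h ⬝ᵥ g = c := by rw [← hg]
    have hgh : g ⬝ᵥ h = c := by rw [dotProduct_comm]; exact hhg
    have hhMg : h ⬝ᵥ M.mulVec g = e := by
      rw [dogleg_sym hM, hg]; exact hgg
    have hgMh : g ⬝ᵥ M.mulVec h = e := by rw [← hg]
    have hkLe : k ≤ L * e := by rw [← hgg]; exact hA g
    have heLc : e ≤ L * c := hB h
    have hc0 : 0 ≤ c := by
      have := hpd.posSemidef.dotProduct_mulVec_nonneg h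
      simpa [hc, dotProduct] using this
    have he0 : 0 ≤ e := hself _
    have hke : η * k ≤ e := by
      have h2 : η * k ≤ η * (L * e) := mul_le_mul_of_nonneg_left hkLe hηpos.le
      rw [← mul_assoc, hηL, one_mul] at h2; exact h2
    have hec : η * e ≤ c := by
      have h2 : η * e ≤ η * (L * c) := mul_le_mul_of_nonneg_left heLc hηpos.le
      rw [← mul_assoc, hηL, one_mul] at h2; exact h2
    simp only [Matrix.mulVec_add, Matrix.mulVec_neg, Matrix.mulVec_smul,
      add_dotProduct, dotProduct_add, neg_dotProduct,
      dotProduct_neg, smul_dotProduct, dotProduct_smul,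
      smul_eq_mul, ← hh]
    simp only [hgg, hhg, hgh, hhMg, hgMh, ← hk, ← hc]
    nlinarith [mul_nonneg (mul_nonneg (sq_nonneg (1 - t)) hηpos.le)
        (sub_nonneg.2 hke),
      mul_nonneg (mul_nonneg (sub_nonneg.2 ht1) ht0.le) (sub_nonneg.2 hec)]
end

section
/- In the dogleg setting with step size η_μ := -‖d(μ)‖²/⟨∇s(0), d(μ)⟩ where ∇s(0) = g and d(μ) is the dogleg path with d(μ) = -ηg + (μ-1)(-M⁻¹g + ηg) for μ ∈ [1,2], the function μ ↦ η_μ is nondecreasing on [1,2], provided g ≠ 0, M is symmetric positive definite, and 0 < η < 1/λ_max(M). -/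
open scoped Matrix
open Matrix

lemma inv_spectral {n : ℕ} (M : Matrix (Fin n) (Fin n) ℝ) (hM : M.IsHermitian) (hpd : M.PosDef) :
    M⁻¹ = (hM.eigenvectorUnitary : Matrix (Fin n) (Fin n) ℝ) *
      diagonal (fun i => (hM.eigenvalues i)⁻¹) *
      star (hM.eigenvectorUnitary : Matrix (Fin n) (Fin n) ℝ) := by
  apply Matrix.inv_eq_right_inv
  nth_rewrite 1 [hM.spectral_theorem]
  have h1 : ((RCLike.ofReal ∘ hM.eigenvalues) : Fin n → ℝ) = hM.eigenvalues := by
    ext i; simp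
  rw [h1]
  have hU : star (hM.eigenvectorUnitary : Matrix (Fin n) (Fin n) ℝ) *
      (hM.eigenvectorUnitary : Matrix (Fin n) (Fin n) ℝ) = 1 :=
    Unitary.coe_star_mul_self hM.eigenvectorUnitary
  have hU2 : (hM.eigenvectorUnitary : Matrix (Fin n) (Fin n) ℝ) *
      star (hM.eigenvectorUnitary : Matrix (Fin n) (Fin n) ℝ) = 1 :=
    Unitary.coe_mul_star_self hM.eigenvectorUnitary
  have hD : diagonal hM.eigenvalues * diagonal (fun i => (hM.eigenvalues i)⁻¹) = 1 := by
    have h2 : (fun i => hM.eigenvalues i * (hM.eigenvalues i)⁻¹) = fun _ => (1:ℝ) :=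
      funext fun i => mul_inv_cancel₀ (hpd.eigenvalues_pos i).ne'
    rw [diagonal_mul_diagonal, h2, diagonal_one]
  calc _ = (hM.eigenvectorUnitary : Matrix (Fin n) (Fin n) ℝ) * (diagonal hM.eigenvalues *
        ((star (hM.eigenvectorUnitary : Matrix (Fin n) (Fin n) ℝ) *
          (hM.eigenvectorUnitary : Matrix (Fin n) (Fin n) ℝ)) *
          diagonal (fun i => (hM.eigenvalues i)⁻¹))) *
          star (hM.eigenvectorUnitary : Matrix (Fin n) (Fin n) ℝ) := by
        simp only [Unitary.conjStarAlgAut_apply, mul_assoc]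
    _ = 1 := by rw [hU, one_mul, hD, mul_one, hU2]

lemma key_ineq {n : ℕ} [NeZero n] (M : Matrix (Fin n) (Fin n) ℝ) (hM : M.IsHermitian)
    (hpd : M.PosDef) (g : Fin n → ℝ) (η : ℝ)
    (hη : η ∈ Set.Ioo (0 : ℝ) (1 / (⨆ i, hM.eigenvalues i))) :
    η * (g ⬝ᵥ g) ≤ g ⬝ᵥ (M⁻¹ *ᵥ g) := by
  set U : Matrix (Fin n) (Fin n) ℝ := (hM.eigenvectorUnitary : Matrix (Fin n) (Fin n) ℝ) with hUdef
  have hstar : star U = Uᵀ := by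
    ext i j
    simp [hUdef, Matrix.star_eq_conjTranspose, Matrix.conjTranspose_apply]
  set y : Fin n → ℝ := Uᵀ *ᵥ g with hy
  have hU2 : U * Uᵀ = 1 := by
    rw [← hstar]; exact Unitary.coe_mul_star_self hM.eigenvectorUnitary
  have hb : g ⬝ᵥ g = ∑ i, y i ^ 2 := by
    have h1 : y ⬝ᵥ y = g ⬝ᵥ g := by
      rw [hy, dotProduct_mulVec, vecMul_transpose, mulVec_mulVec, hU2, one_mulVec]
    rw [← h1, dotProduct]
    exact Finset.sum_congr rfl fun i _ => (sq (y i)).symm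
  have ha : g ⬝ᵥ (M⁻¹ *ᵥ g) = ∑ i, (hM.eigenvalues i)⁻¹ * y i ^ 2 := by
    have hgU : g ᵥ* U = y := by rw [hy, mulVec_transpose]
    rw [inv_spectral M hM hpd, hstar, ← mulVec_mulVec, ← mulVec_mulVec, ← hy,
      dotProduct_mulVec, hgU]
    simp only [dotProduct, mulVec_diagonal]
    exact Finset.sum_congr rfl fun i _ => by ring
  obtain ⟨hη0, hη1⟩ := hη
  have hbdd : BddAbove (Set.range hM.eigenvalues) := Set.Finite.bddAbove (Set.finite_range _)
  have hsup_pos : 0 < ⨆ i, hM.eigenvalues i := by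
    have i0 : Fin n := ⟨0, Nat.pos_of_ne_zero (NeZero.ne n)⟩
    exact lt_of_lt_of_le (hpd.eigenvalues_pos i0) (le_ciSup hbdd i0)
  rw [ha, hb, Finset.mul_sum]
  apply Finset.sum_le_sum
  intro i _
  have h1 : η ≤ (hM.eigenvalues i)⁻¹ := by
    have h2 : hM.eigenvalues i ≤ ⨆ j, hM.eigenvalues j := le_ciSup hbdd i
    have h3 : 1 / (⨆ j, hM.eigenvalues j) ≤ 1 / hM.eigenvalues i :=
      one_div_le_one_div_of_le (hpd.eigenvalues_pos i) h2
    rw [one_div, one_div] at h3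
    rw [one_div] at hη1
    exact le_of_lt (lt_of_lt_of_le hη1 h3)
  nlinarith [sq_nonneg (y i)]

/-- Lemma 3.2: the step size `η_μ = -‖d(μ)‖²/⟨g, d(μ)⟩` is a
nondecreasing function of `μ` on `[1,2]`, where
`d(μ) = -ηg + (μ-1)(-M⁻¹g + ηg)`. -/
theorem dogleg_stepsize_monotone {n : ℕ} [NeZero n]
    (M : Matrix (Fin n) (Fin n) ℝ) (hM : M.IsHermitian) (hpd : M.PosDef)
    (g : Fin n → ℝ) (hg : g ≠ 0)
    (η : ℝ) (hη : η ∈ Set.Ioo (0 : ℝ) (1 / (⨆ i, hM.eigenvalues i)))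
    (d : ℝ → (Fin n → ℝ))
    (hd : ∀ μ ∈ Set.Icc (1 : ℝ) 2,
      d μ = -(η • g) + (μ - 1) • (-(M⁻¹.mulVec g) + η • g))
    (ημ : ℝ → ℝ)
    (hημ : ∀ μ ∈ Set.Icc (1 : ℝ) 2, ημ μ = -(d μ ⬝ᵥ d μ) / (g ⬝ᵥ d μ)) :
    MonotoneOn ημ (Set.Icc (1 : ℝ) 2) := by
  set v : Fin n → ℝ := M⁻¹.mulVec g with hv
  set P : ℝ := g ⬝ᵥ g with hP
  set Q : ℝ := g ⬝ᵥ v with hQ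
  set R : ℝ := v ⬝ᵥ v with hR
  have hvg : v ⬝ᵥ g = Q := dotProduct_comm v g
  have hPpos : 0 < P := by
    rw [hP, dotProduct]
    obtain ⟨i, hi⟩ := Function.ne_iff.mp hg
    simp only [Pi.zero_apply] at hi
    exact Finset.sum_pos' (fun j _ => mul_self_nonneg (g j))
      ⟨i, Finset.mem_univ i, mul_self_pos.2 hi⟩
  have hkey : η * P ≤ Q := key_ineq M hM hpd g η hη
  have hKnn : 0 ≤ R - 2*η*Q + η^2*P := by
    have h0 : 0 ≤ (v - η • g) ⬝ᵥ (v - η • g) :=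
      Finset.sum_nonneg fun i _ => mul_self_nonneg _
    have h1 : (v - η • g) ⬝ᵥ (v - η • g) = R - 2*η*Q + η^2*P := by
      simp only [sub_dotProduct, dotProduct_sub, smul_dotProduct, dotProduct_smul,
        smul_eq_mul, hvg, ← hR, ← hQ, ← hP]
      ring
    linarith [h1 ▸ h0]
  obtain ⟨hη0, _⟩ := hη
  intro a ha b hb hab
  obtain ⟨ha1, ha2⟩ := ha
  obtain ⟨hb1, hb2⟩ := hb
  have hdot : ∀ μ ∈ Set.Icc (1:ℝ) 2, d μ ⬝ᵥ d μ
      = η^2*(2-μ)^2*P + 2*η*(2-μ)*(μ-1)*Q + (μ-1)^2*R := by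
    intro μ hμ
    rw [hd μ hμ]
    simp only [add_dotProduct, dotProduct_add, neg_dotProduct, dotProduct_neg,
      smul_dotProduct, dotProduct_smul, smul_eq_mul, hvg, ← hR, ← hQ, ← hP, neg_neg]
    ring
  have hgd : ∀ μ ∈ Set.Icc (1:ℝ) 2, g ⬝ᵥ d μ = -(η*(2-μ)*P + (μ-1)*Q) := by
    intro μ hμ
    rw [hd μ hμ]
    simp only [add_dotProduct, dotProduct_add, neg_dotProduct, dotProduct_neg,
      smul_dotProduct, dotProduct_smul, smul_eq_mul, hvg, ← hR, ← hQ, ← hP, neg_neg]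
    ring
  have hDa : 0 < η*(2-a)*P + (a-1)*Q := by nlinarith
  have hDb : 0 < η*(2-b)*P + (b-1)*Q := by nlinarith
  rw [hημ a ⟨ha1, ha2⟩, hημ b ⟨hb1, hb2⟩, hdot a ⟨ha1, ha2⟩, hdot b ⟨hb1, hb2⟩,
    hgd a ⟨ha1, ha2⟩, hgd b ⟨hb1, hb2⟩, div_neg, div_neg, neg_div, neg_div, neg_neg, neg_neg,
    div_le_div_iff₀ hDa hDb]
  nlinarith [mul_nonneg (mul_nonneg (mul_nonneg (sub_nonneg.2 hab) (sq_nonneg η))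
      hPpos.le) (sub_nonneg.2 hkey),
    mul_nonneg (mul_nonneg (mul_nonneg (mul_nonneg (sub_nonneg.2 hab)
      (by linarith : (0:ℝ) ≤ a + b - 2)) hη0.le) hPpos.le) hKnn,
    mul_nonneg (mul_nonneg (mul_nonneg (mul_nonneg (sub_nonneg.2 hab)
      (by linarith : (0:ℝ) ≤ a - 1)) (by linarith : (0:ℝ) ≤ b - 1)) hKnn)
      (sub_nonneg.2 hkey)]
end

section
/- Let M be symmetric positive definite with eigenvalues bounded in [λ_min, λ_max] with λ_min > 0, g ∈ ℝⁿ nonzero, η ∈ (0, 1/λ_max). Then the step sizes η_μ = -‖d(μ)‖²/⟨g, d(μ)⟩, for μ ranging over (1,2], are bounded above by a finite constant depending only on η, λ_min, λ_max (and not on μ or g). -/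
set_option maxHeartbeats 1000000
open Matrix
open scoped Matrix

lemma quad_aux {n : ℕ} {M : Matrix (Fin n) (Fin n) ℝ} (hM : M.IsHermitian) {a b : ℝ}
    (ha : ∀ i, a ≤ hM.eigenvalues i) (hb : ∀ i, hM.eigenvalues i ≤ b) (h0 : 0 ≤ a)
    (x : Fin n → ℝ) :
    a * (x ⬝ᵥ x) ≤ x ⬝ᵥ M *ᵥ x ∧ x ⬝ᵥ M *ᵥ x ≤ b * (x ⬝ᵥ x) ∧
    a ^ 2 * (x ⬝ᵥ x) ≤ (M *ᵥ x) ⬝ᵥ (M *ᵥ x) ∧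
    (M *ᵥ x) ⬝ᵥ (M *ᵥ x) ≤ b ^ 2 * (x ⬝ᵥ x) := by
  set U := (hM.eigenvectorUnitary : Matrix (Fin n) (Fin n) ℝ) with hU
  have hstar : star U = Uᵀ := by
    ext i j; simp [Matrix.star_eq_conjTranspose, Matrix.conjTranspose_apply]
  have h1 : U * Uᵀ = 1 := by
    rw [← hstar]; exact (Matrix.mem_unitaryGroup_iff).mp hM.eigenvectorUnitary.2
  have h2 : Uᵀ * U = 1 := by
    rw [← hstar]; exact (Matrix.mem_unitaryGroup_iff').mp hM.eigenvectorUnitary.2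
  set ev := hM.eigenvalues with hev
  have hspec : M = U * diagonal ev * Uᵀ := by
    have := hM.spectral_theorem
    rw [← hstar]
    convert this using 3
    rw [Unitary.conjStarAlgAut_apply, RCLike.ofReal_real_eq_id, Function.id_comp]
  set c := Uᵀ *ᵥ x with hc
  have hxc : x = U *ᵥ c := by
    rw [hc, mulVec_mulVec, h1, one_mulVec]
  have key : ∀ y z : Fin n → ℝ, (U *ᵥ y) ⬝ᵥ (U *ᵥ z) = y ⬝ᵥ z := by
    intro y z
    rw [Matrix.dotProduct_mulVec, ← Matrix.mulVec_transpose, mulVec_mulVec, h2, one_mulVec]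
  have hMx : M *ᵥ x = U *ᵥ (diagonal ev *ᵥ c) := by
    rw [hxc, hspec, mulVec_mulVec, mul_assoc, mul_assoc, h2, mul_one, ← mulVec_mulVec]
  have e1 : x ⬝ᵥ x = ∑ i, c i ^ 2 := by
    rw [hxc, key]; simp [dotProduct, sq]
  have e2 : x ⬝ᵥ M *ᵥ x = ∑ i, ev i * c i ^ 2 := by
    rw [hMx, hxc, key]
    simp only [dotProduct, mulVec_diagonal]; exact Finset.sum_congr rfl fun i _ => by ring
  have e3 : (M *ᵥ x) ⬝ᵥ (M *ᵥ x) = ∑ i, ev i ^ 2 * c i ^ 2 := by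
    rw [hMx, key]
    simp only [dotProduct, mulVec_diagonal]; exact Finset.sum_congr rfl fun i _ => by ring
  refine ⟨?_, ?_, ?_, ?_⟩ <;> rw [e1] <;> [rw [e2]; rw [e2]; rw [e3]; rw [e3]] <;>
    rw [Finset.mul_sum] <;> apply Finset.sum_le_sum <;> intro i _
  · exact mul_le_mul_of_nonneg_right (ha i) (sq_nonneg _)
  · exact mul_le_mul_of_nonneg_right (hb i) (sq_nonneg _)
  · exact mul_le_mul_of_nonneg_right (pow_le_pow_left₀ h0 (ha i) 2) (sq_nonneg _)
  · exact mul_le_mul_of_nonneg_right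
      (pow_le_pow_left₀ (le_trans h0 (ha i)) (hb i) 2) (sq_nonneg _)

/-- Lemma 3.3: the dogleg step sizes
`η_μ = -‖d(μ)‖²/⟨g, d(μ)⟩`, for `μ ∈ (1,2]`, are bounded above by a
finite constant depending only on `η`, `λ_min`, `λ_max` (not on `μ` or `g`). -/
theorem dogleg_stepsize_bounded {n : ℕ} [NeZero n] (η lammin lammax : ℝ)
    (hlam : 0 < lammin) (hη : η ∈ Set.Ioo (0 : ℝ) (1 / lammax)) :
    ∃ B : ℝ, ∀ (M : Matrix (Fin n) (Fin n) ℝ) (hM : M.IsHermitian),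
      M.PosDef → (∀ i, lammin ≤ hM.eigenvalues i) →
      (∀ i, hM.eigenvalues i ≤ lammax) →
      ∀ (g : Fin n → ℝ), g ≠ 0 → ∀ μ ∈ Set.Ioc (1 : ℝ) 2,
        -((-(η • g) + (μ - 1) • (-(M⁻¹.mulVec g) + η • g)) ⬝ᵥ
            (-(η • g) + (μ - 1) • (-(M⁻¹.mulVec g) + η • g))) /
          (g ⬝ᵥ (-(η • g) + (μ - 1) • (-(M⁻¹.mulVec g) + η • g))) ≤ B := by
  obtain ⟨hη0, hη1⟩ := hη
  have hmax : 0 < lammax := by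
    by_contra h
    push_neg at h
    have : 1 / lammax ≤ 0 := one_div_nonpos.mpr h
    linarith
  set C : ℝ := lammin ^ 2 * η ^ 2 + 2 * η * lammax + 1 with hC
  set m : ℝ := min η (lammin / lammax ^ 2) with hm
  have hmpos : 0 < m := lt_min hη0 (div_pos hlam (by positivity))
  have hCpos : 0 < C := by positivity
  refine ⟨(C / lammin ^ 2) / m, ?_⟩
  intro M hM hpd hea heb g hg μ hμ
  obtain ⟨hμ1, hμ2⟩ := hμ
  set x := M⁻¹.mulVec g with hx
  have hMx : M *ᵥ x = g := by
    rw [hx, mulVec_mulVec, Matrix.mul_nonsing_inv _ (isUnit_iff_ne_zero.mpr hpd.det_pos.ne'),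
      one_mulVec]
  obtain ⟨A1, A2, A3, A4⟩ := quad_aux hM hea heb hlam.le x
  rw [hMx] at A3 A4
  set G := g ⬝ᵥ g with hG
  set X := x ⬝ᵥ x with hX
  set s := g ⬝ᵥ x with hs
  have hsx : x ⬝ᵥ g = s := dotProduct_comm x g
  have hsP : x ⬝ᵥ M *ᵥ x = s := by rw [hMx, hsx]
  rw [hsP] at A1 A2
  have hXnn : 0 ≤ X := by
    rw [hX]; exact Finset.sum_nonneg fun i _ => mul_self_nonneg _
  have hGpos : 0 < G := by
    rcases (Finset.sum_nonneg (fun i (_ : i ∈ Finset.univ) => mul_self_nonneg (g i))).lt_or_eq with h | h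
    · exact h
    · exfalso; apply hg; funext i
      have := Finset.sum_eq_zero_iff_of_nonneg (fun i (_ : i ∈ Finset.univ) => mul_self_nonneg (g i)) |>.mp h.symm i (Finset.mem_univ i)
      simpa using mul_self_eq_zero.mp this
  have hsnn : 0 ≤ s := by nlinarith
  set d := -(η • g) + (μ - 1) • (-x + η • g) with hd
  have hN : d ⬝ᵥ d = ((μ-2)*η)^2*G + 2*((μ-2)*η)*(-(μ-1))*s + (μ-1)^2*X := by
    rw [hd]
    simp only [dotProduct_add, add_dotProduct, dotProduct_smul, smul_dotProduct,
      smul_eq_mul, neg_dotProduct, dotProduct_neg, ← hG, ← hX, ← hs, hsx]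
    ring
  have hDn : g ⬝ᵥ d = ((μ-2)*η)*G + (-(μ-1))*s := by
    rw [hd]
    simp only [dotProduct_add, dotProduct_smul, smul_eq_mul, dotProduct_neg, ← hG, ← hs]
    ring
  -- s ≥ (lammin/lammax^2) * G
  have hsq : lammin / lammax ^ 2 * G ≤ s := by
    rw [div_mul_eq_mul_div, div_le_iff₀ (by positivity)]
    nlinarith
  -- numerator bound
  have k4 : lammin ^ 2 * s ≤ lammax * G := by nlinarith
  have hN' : d ⬝ᵥ d ≤ η ^ 2 * G + 2 * η * s + X := by
    rw [hN]
    have q1 : (μ - 2) ^ 2 ≤ 1 := by nlinarith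
    have q2 : (2 - μ) * (μ - 1) ≤ 1 := by nlinarith
    have k1 : ((μ-2)*η) ^ 2 * G ≤ η ^ 2 * G := by
      nlinarith [mul_nonneg (mul_nonneg (sub_nonneg.mpr q1) (sq_nonneg η)) hGpos.le]
    have k2 : 2*((μ-2)*η)*(-(μ-1))*s ≤ 2 * η * s := by
      nlinarith [mul_nonneg (mul_nonneg (sub_nonneg.mpr q2) hη0.le) hsnn]
    have k3 : (μ-1) ^ 2 * X ≤ X := by nlinarith [mul_nonneg (sub_nonneg.mpr q1) hXnn, sq_nonneg (μ-1)]
    linarith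
  have hNum : d ⬝ᵥ d ≤ C / lammin ^ 2 * G := by
    rw [div_mul_eq_mul_div, le_div_iff₀ (by positivity)]
    have h5 : 2 * η * (lammin ^ 2 * s) ≤ 2 * η * (lammax * G) :=
      mul_le_mul_of_nonneg_left k4 (by positivity)
    nlinarith [mul_le_mul_of_nonneg_right hN' (sq_nonneg lammin), A3]
  -- denominator bound
  have hDen : m * G ≤ -(g ⬝ᵥ d) := by
    rw [hDn]
    rcases le_total η (lammin / lammax ^ 2) with h | h
    · have hm' : m = η := min_eq_left h
      have : η * G ≤ s := le_trans (by nlinarith) hsq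
      rw [hm']
      nlinarith
    · have hm' : m = lammin / lammax ^ 2 := min_eq_right h
      rw [hm']
      nlinarith [mul_nonneg (sub_nonneg.mpr hμ2) (mul_nonneg (sub_nonneg.mpr h) hGpos.le)]
  have hDnneg : g ⬝ᵥ d < 0 := by nlinarith
  rw [div_le_iff_of_neg hDnneg]
  have hBnn : 0 ≤ C / lammin ^ 2 / m := by positivity
  calc C / lammin ^ 2 / m * (g ⬝ᵥ d) ≤ C / lammin ^ 2 / m * (-(m * G)) := by
        apply mul_le_mul_of_nonneg_left (by linarith) hBnn
    _ = -(C / lammin ^ 2 * G) := by field_simp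
    _ ≤ -(d ⬝ᵥ d) := by linarith
end

section
/- Let d = d(μ) be a dogleg direction with ⟨g,d⟩ < 0, M symmetric positive definite, and suppose dᵀMd + ⟨g,d⟩ ≤ 0. Define s̄(β) = β⟨g,d⟩ + (β²/2)dᵀMd and m̄_μ(β) = ⟨g_μ, βd⟩ + (β²/(2η_μ))‖d‖² with g_μ = (⟨g,d⟩/‖d‖²)d and η_μ = -‖d‖²/⟨g,d⟩. Then β = 1 is the unique minimizer of m̄_μ and 1 ≤ argmin_β s̄(β); consequently s̄(β) ≤ m̄_μ(β) for all β ∈ ℝ. -/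
open scoped Matrix

/-- Lemma 3.6: under the descent condition
`dᵀMd + ⟨g,d⟩ ≤ 0`, the point `β = 1` is the unique minimizer of the
restricted surrogate `m̄_μ`, every minimizer of the restricted objective `s̄`
is `≥ 1`, and consequently `s̄(β) ≤ m̄_μ(β)` for all `β`. -/
theorem dogleg_argmin_comparison {n : ℕ} [NeZero n]
    (M : Matrix (Fin n) (Fin n) ℝ) (hM : M.IsHermitian) (hpd : M.PosDef)
    (g d : Fin n → ℝ) (hgd : g ⬝ᵥ d < 0)
    (hdesc : d ⬝ᵥ M.mulVec d + g ⬝ᵥ d ≤ 0)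
    (gμ : Fin n → ℝ) (hgμ : gμ = ((g ⬝ᵥ d) / (d ⬝ᵥ d)) • d)
    (ημ : ℝ) (hημ : ημ = -(d ⬝ᵥ d) / (g ⬝ᵥ d))
    (sbar mbar : ℝ → ℝ)
    (hs : ∀ β : ℝ, sbar β = β * (g ⬝ᵥ d) + β ^ 2 / 2 * (d ⬝ᵥ M.mulVec d))
    (hm : ∀ β : ℝ, mbar β = β * (gμ ⬝ᵥ d) + β ^ 2 / (2 * ημ) * (d ⬝ᵥ d)) :
    (∀ β : ℝ, β ≠ 1 → mbar 1 < mbar β) ∧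
      (∀ βs : ℝ, (∀ β : ℝ, sbar βs ≤ sbar β) → 1 ≤ βs) ∧
      ∀ β : ℝ, sbar β ≤ mbar β := by
  have hd0 : d ≠ 0 := by
    intro h
    rw [h, dotProduct_zero] at hgd
    exact lt_irrefl 0 hgd
  have hcpos : 0 < d ⬝ᵥ d := by
    have h1 : (0:ℝ) ≤ d ⬝ᵥ d := Finset.sum_nonneg fun i _ => mul_self_nonneg _
    rcases h1.lt_or_eq with h | h
    · exact h
    · exact absurd ((dotProduct_self_eq_zero).1 h.symm) hd0
  have hqpos : 0 < d ⬝ᵥ M.mulVec d := by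
    have := hpd.dotProduct_mulVec_pos hd0
    simpa using this
  set a := g ⬝ᵥ d with ha
  set c := d ⬝ᵥ d with hc
  set q := d ⬝ᵥ M.mulVec d with hq
  have ha0 : a ≠ 0 := ne_of_lt hgd
  have hc0 : c ≠ 0 := ne_of_gt hcpos
  have hgda : gμ ⬝ᵥ d = a := by
    rw [hgμ, smul_dotProduct, smul_eq_mul, ← hc, div_mul_cancel₀ _ hc0]
  have hmb : ∀ β : ℝ, mbar β = β * a - β ^ 2 * a / 2 := by
    intro β
    rw [hm, hgda, hημ]
    field_simp
    ring
  refine ⟨?_, ?_, ?_⟩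
  · intro β hβ
    rw [hmb, hmb]
    have hne : β - 1 ≠ 0 := sub_ne_zero.2 hβ
    have h1 : (0:ℝ) < (β - 1) ^ 2 := by positivity
    nlinarith [h1, hgd]
  · intro βs h
    have hq0 : q ≠ 0 := ne_of_gt hqpos
    set t : ℝ := -(a + βs * q) / q with ht
    have h1 := h (βs + t)
    rw [hs, hs] at h1
    have h2 : 0 ≤ t * (a + βs * q) + t ^ 2 * q / 2 := by nlinarith [h1]
    have h3 : t * q = -(a + βs * q) := by
      rw [ht]; field_simp
    have h4 : t * q * (a + βs * q) = -(a + βs * q) ^ 2 := by rw [h3]; ring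
    have h5 : (t * q) ^ 2 = (a + βs * q) ^ 2 := by rw [h3]; ring
    have key : a + βs * q = 0 := by
      have h6 : (a + βs * q) ^ 2 ≤ 0 := by
        nlinarith [mul_nonneg hqpos.le h2, h4, h5]
      nlinarith [sq_nonneg (a + βs * q)]
    nlinarith [hqpos, hdesc, key]
  · intro β
    rw [hs, hmb]
    nlinarith [mul_nonpos_of_nonneg_of_nonpos (sq_nonneg β) hdesc]
end

section
/- (Opportunistic majorization along the dogleg line) For any μ ∈ (1,2], with M symmetric positive definite, g ≠ 0, η ∈ (0, 1/λ_max(M)), s(x) = ⟨g,x⟩ + ½xᵀMx, d = d(μ) the dogleg direction, g_μ = (⟨g,d⟩/‖d‖²)d, η_μ = -‖d‖²/⟨g,d⟩, and m_μ(x) = ⟨g_μ,x⟩ + (1/(2η_μ))‖x‖², it holds that s(x) ≤ m_μ(x) for every x on the line {βd : β ∈ ℝ}. -/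
open scoped Matrix

section helpers
variable {n : ℕ}

lemma rayleigh_le [NeZero n] (M : Matrix (Fin n) (Fin n) ℝ) (hM : M.IsHermitian)
    (x : Fin n → ℝ) : x ⬝ᵥ M.mulVec x ≤ (⨆ i, hM.eigenvalues i) * (x ⬝ᵥ x) := by
  classical
  set L := ⨆ i, hM.eigenvalues i with hL
  have hLmax : ∀ i, hM.eigenvalues i ≤ L := fun i =>
    le_ciSup (Set.Finite.bddAbove (Set.finite_range _)) i
  set U : Matrix (Fin n) (Fin n) ℝ := (hM.eigenvectorUnitary : Matrix (Fin n) (Fin n) ℝ) with hU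
  set y : Fin n → ℝ := star U *ᵥ x with hy
  have hUU : U * star U = 1 := Matrix.mem_unitaryGroup_iff.mp hM.eigenvectorUnitary.2
  have hUUt : U * Uᵀ = 1 := by
    rw [Matrix.star_eq_conjTranspose, Matrix.conjTranspose_eq_transpose_of_trivial] at hUU; exact hUU
  have hyy : y ⬝ᵥ y = x ⬝ᵥ x := by
    rw [hy, Matrix.dotProduct_mulVec, Matrix.star_eq_conjTranspose, Matrix.conjTranspose_eq_transpose_of_trivial,
      Matrix.vecMul_transpose, Matrix.mulVec_mulVec, hUUt, Matrix.one_mulVec]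
  have hspec := hM.spectral_theorem
  have hxMx : x ⬝ᵥ M.mulVec x = ∑ i, hM.eigenvalues i * (y i * y i) := by
    conv_lhs => rw [hspec, Unitary.conjStarAlgAut_apply]
    rw [← Matrix.mulVec_mulVec, ← Matrix.mulVec_mulVec, Matrix.dotProduct_mulVec x,
      ← Matrix.mulVec_transpose, ← Matrix.conjTranspose_eq_transpose_of_trivial,
      ← Matrix.star_eq_conjTranspose, ← hy]
    simp [Matrix.mulVec_diagonal, dotProduct, Function.comp, mul_comm, mul_assoc, mul_left_comm]
  have hyy' : y ⬝ᵥ y = ∑ i, y i * y i := rfl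
  rw [hxMx, ← hyy, hyy', Finset.mul_sum]
  apply Finset.sum_le_sum
  intro i _
  have : 0 ≤ y i * y i := mul_self_nonneg _
  exact mul_le_mul_of_nonneg_right (hLmax i) this

lemma cs_posdef (M : Matrix (Fin n) (Fin n) ℝ) (hpsd : M.PosSemidef)
    (x z : Fin n → ℝ) : (x ⬝ᵥ M.mulVec z) ^ 2 ≤ (x ⬝ᵥ M.mulVec x) * (z ⬝ᵥ M.mulVec z) := by
  classical
  obtain ⟨B, rfl⟩ : ∃ B : Matrix (Fin n) (Fin n) ℝ, M = Bᴴ * B := by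
    open scoped MatrixOrder in
    obtain ⟨X, hX, -, rfl⟩ := CFC.exists_sqrt_of_isSelfAdjoint_of_quasispectrumRestricts
      hpsd.isHermitian (QuasispectrumRestricts.nnreal_of_nonneg hpsd.nonneg)
    exact ⟨X, by rw [← Matrix.star_eq_conjTranspose, hX.star_eq]⟩
  have key : ∀ a b : Fin n → ℝ, a ⬝ᵥ (Bᴴ * B).mulVec b = (B *ᵥ a) ⬝ᵥ (B *ᵥ b) := by
    intro a b
    rw [← Matrix.mulVec_mulVec, Matrix.dotProduct_mulVec a,
      Matrix.conjTranspose_eq_transpose_of_trivial, ← Matrix.mulVec_transpose]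
    simp [Matrix.transpose_transpose]
  rw [key, key, key]
  have := Finset.sum_mul_sq_le_sq_mul_sq Finset.univ (B *ᵥ x) (B *ᵥ z)
  simpa [dotProduct, pow_two, mul_assoc] using this

end helpers


/-- Theorem 3.1, opportunistic majorization along the dogleg
line: for any `μ ∈ (1,2]`, the surrogate `m_μ` majorizes
`s(x) = ⟨g,x⟩ + ½ xᵀMx` on the line `{βd(μ) : β ∈ ℝ}`. -/
theorem opportunistic_majorization_on_line {n : ℕ} [NeZero n]
    (M : Matrix (Fin n) (Fin n) ℝ) (hM : M.IsHermitian) (hpd : M.PosDef)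
    (g : Fin n → ℝ) (hg : g ≠ 0)
    (η : ℝ) (hη : η ∈ Set.Ioo (0 : ℝ) (1 / (⨆ i, hM.eigenvalues i)))
    (d : ℝ → (Fin n → ℝ))
    (hd : ∀ μ ∈ Set.Ioc (1 : ℝ) 2,
      d μ = -(η • g) + (μ - 1) • (-(M⁻¹.mulVec g) + η • g))
    (s : (Fin n → ℝ) → ℝ)
    (hsdef : ∀ x : Fin n → ℝ, s x = g ⬝ᵥ x + (1 / 2) * (x ⬝ᵥ M.mulVec x)) :
    ∀ μ ∈ Set.Ioc (1 : ℝ) 2,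
      ∀ (gμ : Fin n → ℝ) (ημ : ℝ) (mμ : (Fin n → ℝ) → ℝ),
        gμ = ((g ⬝ᵥ d μ) / (d μ ⬝ᵥ d μ)) • d μ →
        ημ = -(d μ ⬝ᵥ d μ) / (g ⬝ᵥ d μ) →
        (∀ x : Fin n → ℝ, mμ x = gμ ⬝ᵥ x + (1 / (2 * ημ)) * (x ⬝ᵥ x)) →
        ∀ β : ℝ, s (β • d μ) ≤ mμ (β • d μ) := by
    classical
  set L : ℝ := ⨆ i, hM.eigenvalues i with hLdef
  obtain ⟨hη0, hη1⟩ := hη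
  -- L > 0
  have hL0 : 0 < L := by
    obtain ⟨i⟩ : Nonempty (Fin n) := Fin.pos_iff_nonempty.mp (Nat.pos_of_ne_zero (NeZero.ne n))
    exact lt_of_lt_of_le (hpd.eigenvalues_pos i)
      (le_ciSup (Set.Finite.bddAbove (Set.finite_range _)) i)
  have hηL : η * L < 1 := by
    rw [lt_div_iff₀ hL0] at hη1; linarith
  -- basic quantities
  set u : Fin n → ℝ := M⁻¹.mulVec g with hudef
  have hdet : IsUnit M.det := isUnit_iff_ne_zero.mpr hpd.det_pos.ne'
  have hMu : M *ᵥ u = g := by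
    rw [hudef, Matrix.mulVec_mulVec, Matrix.mul_nonsing_inv _ hdet, Matrix.one_mulVec]
  have hMsymm : Mᵀ = M := by
    have := hM; rwa [Matrix.IsHermitian, Matrix.conjTranspose_eq_transpose_of_trivial] at this
  have hug : u ⬝ᵥ M *ᵥ g = g ⬝ᵥ g := by
    rw [Matrix.dotProduct_mulVec u, ← Matrix.mulVec_transpose, hMsymm, hMu]
  have hcomm : u ⬝ᵥ g = g ⬝ᵥ u := dotProduct_comm u g
  have hgg0 : 0 < g ⬝ᵥ g := by
    refine lt_of_le_of_ne (Finset.sum_nonneg fun i _ => mul_self_nonneg _) ?_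
    intro h
    exact hg (dotProduct_self_eq_zero.mp h.symm)
  have hBqpos : 0 < g ⬝ᵥ M *ᵥ g := by
    have := hpd.re_dotProduct_pos hg
    simpa using this
  have hBqle : g ⬝ᵥ M *ᵥ g ≤ L * (g ⬝ᵥ g) := rayleigh_le M hM g
  -- Cauchy-Schwarz for M: gives lower bound on g ⬝ᵥ u
  have hCS : (g ⬝ᵥ g) ^ 2 ≤ (g ⬝ᵥ u) * (g ⬝ᵥ M *ᵥ g) := by
    have h := cs_posdef M hpd.posSemidef u g
    have huMu : u ⬝ᵥ M *ᵥ u = g ⬝ᵥ u := by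
      rw [Matrix.dotProduct_mulVec u, ← Matrix.mulVec_transpose, hMsymm, hMu]
    rw [hug, huMu] at h
    exact h
  have hgu0 : 0 < g ⬝ᵥ u := by
    nlinarith [sq_nonneg (g ⬝ᵥ g)]
  have hC : η * (g ⬝ᵥ g) ≤ g ⬝ᵥ u := by
    have h1 : (g ⬝ᵥ g) ≤ (g ⬝ᵥ u) * L := by
      nlinarith
    nlinarith
  have hηBq : η * (g ⬝ᵥ M *ᵥ g) ≤ g ⬝ᵥ g := by nlinarith
  -- main loop
  intro μ hμ gμ ημ mμ hgμ hημ hmμ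
  obtain ⟨hμ1, hμ2⟩ := hμ
  have hdμ := hd μ ⟨hμ1, hμ2⟩
  -- scalar identities
  have hgd : g ⬝ᵥ d μ = -((2-μ)*η*(g ⬝ᵥ g)) - (μ-1)*(g ⬝ᵥ u) := by
    rw [hdμ]
    simp only [dotProduct_add, dotProduct_neg, dotProduct_smul,
      smul_eq_mul]
    ring
  have hexp : g ⬝ᵥ d μ + d μ ⬝ᵥ M *ᵥ d μ =
      (2-μ)^2*η*(η*(g ⬝ᵥ M *ᵥ g) - (g ⬝ᵥ g)) + (μ-1)*(2-μ)*(η*(g ⬝ᵥ g) - (g ⬝ᵥ u)) := by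
    rw [hdμ]
    simp only [Matrix.mulVec_add, Matrix.mulVec_neg, Matrix.mulVec_smul, hMu,
      dotProduct_add, add_dotProduct, dotProduct_neg,
      neg_dotProduct, dotProduct_smul, smul_dotProduct,
      smul_eq_mul, smul_neg, hug, dotProduct_comm u g]
    ring
  -- key inequality
  have hkey : g ⬝ᵥ d μ + d μ ⬝ᵥ M *ᵥ d μ ≤ 0 := by
    rw [hexp]
    have t1 : (2-μ)^2*η*(η*(g ⬝ᵥ M *ᵥ g) - (g ⬝ᵥ g)) ≤ 0 :=
      mul_nonpos_of_nonneg_of_nonpos (mul_nonneg (sq_nonneg _) hη0.le) (by linarith)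
    have t2 : (μ-1)*(2-μ)*(η*(g ⬝ᵥ g) - (g ⬝ᵥ u)) ≤ 0 :=
      mul_nonpos_of_nonneg_of_nonpos
        (mul_nonneg (by linarith) (by linarith)) (by linarith)
    linarith
  have hgdneg : g ⬝ᵥ d μ < 0 := by
    rw [hgd]
    nlinarith [mul_nonneg (mul_nonneg (by linarith : (0:ℝ) ≤ 2-μ) hη0.le) hgg0.le]
  have hddpos : 0 < d μ ⬝ᵥ d μ := by
    refine lt_of_le_of_ne (Finset.sum_nonneg fun i _ => mul_self_nonneg _) ?_
    intro h
    have hd0 : d μ = 0 := dotProduct_self_eq_zero.mp h.symm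
    rw [hd0] at hgdneg
    simp [dotProduct_zero] at hgdneg
  -- conclude
  intro β
  rw [hsdef, hmμ, hgμ, hημ]
  set G := g ⬝ᵥ d μ
  set D := d μ ⬝ᵥ d μ with hD
  set Q := d μ ⬝ᵥ M *ᵥ d μ with hQ
  have e0 : g ⬝ᵥ (β • d μ) = β * G := by
    simp [dotProduct_smul, G]
  have e1 : (β • d μ) ⬝ᵥ M *ᵥ (β • d μ) = β^2 * Q := by
    simp only [Matrix.mulVec_smul, dotProduct_smul, smul_dotProduct,
      smul_eq_mul, ← hQ]
    ring
  have e2 : ((G / D) • d μ) ⬝ᵥ (β • d μ) = β * G := by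
    simp only [dotProduct_smul, smul_dotProduct, smul_eq_mul, ← hD]
    field_simp
    try ring
  have e3 : (β • d μ) ⬝ᵥ (β • d μ) = β^2 * D := by
    simp only [dotProduct_smul, smul_dotProduct, smul_eq_mul, ← hD]
    try ring
  rw [e0, e1, e2, e3]
  have hGne : G ≠ 0 := ne_of_lt hgdneg
  have hDne : D ≠ 0 := ne_of_gt hddpos
  have e4 : 1 / (2 * (-D / G)) * (β^2 * D) = -(β^2 * G) / 2 := by
    field_simp
  rw [e4]
  have hb2 : 0 ≤ β^2 := sq_nonneg β
  nlinarith [mul_nonneg hb2 (neg_nonneg.mpr hkey)]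
end

section
/- Let θ ∈ [0, 1/2), C > 0, and define φ(t) = (C/(1-2θ)) t^{2θ-1} for t > 0. Let (R_k) be a positive nonincreasing sequence with R_{k+1}^{2θ-2}(R_k - R_{k+1}) ≥ β_{k+1} for positive β_k with β_k ≤ β̄. Then there exists c > 0 such that φ(R_{k+1}) - φ(R_k) ≥ c β_{k+1} for all k ≥ k₀, and consequently R_{k+1} ≤ D (∑_{n=k₀}^{k} β_{n+1})^{-1/(1-2θ)} for an appropriate constant D > 0. -/
/-- Convexity bound for negative exponents: for `0 < b ≤ a` and `-1 ≤ α < 0`,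
`(-α) * a^(α-1) * (a - b) ≤ b^α - a^α`. -/
lemma rpow_convexity_neg {a b α : ℝ} (hb : 0 < b) (hba : b ≤ a)
    (hα1 : -1 ≤ α) (hα0 : α < 0) :
    (-α) * (a ^ (α - 1) * (a - b)) ≤ b ^ α - a ^ α := by
  have ha : 0 < a := lt_of_lt_of_le hb hba
  set s : ℝ := b / a - 1 with hs
  have hs0 : -1 < s := by
    have : 0 < b / a := div_pos hb ha
    simp [hs]; linarith
  have hsle : s ≤ 0 := by
    have : b / a ≤ 1 := (div_le_one ha).mpr hba
    simp [hs]; linarith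
  set u : ℝ := -α with hu
  have hu0 : 0 < u := by simp [hu]; linarith
  have hu1 : u ≤ 1 := by simp [hu]; linarith
  -- Bernoulli: (1+s)^u ≤ 1 + u s
  have hbern : (1 + s) ^ u ≤ 1 + u * s :=
    rpow_one_add_le_one_add_mul_self hs0.le hu0.le hu1
  have h1s : (0:ℝ) < 1 + s := by linarith
  have h1us : (0:ℝ) < 1 + u * s := by nlinarith
  -- (1+s)^α = ((1+s)^u)⁻¹ ≥ (1+us)⁻¹ ≥ 1 - us = 1 + α s
  have hpowpos : (0:ℝ) < (1 + s) ^ u := Real.rpow_pos_of_pos h1s u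
  have hkey : 1 + α * s ≤ (1 + s) ^ α := by
    have h2 : (1 + s) ^ α = ((1 + s) ^ u)⁻¹ := by
      rw [hu, Real.rpow_neg h1s.le] at *
      simp [hu]
    rw [h2]
    have h3 : (1 + u * s)⁻¹ ≤ ((1 + s) ^ u)⁻¹ :=
      inv_anti₀ hpowpos hbern
    have h4 : 1 - u * s ≤ (1 + u * s)⁻¹ := by
      rw [← one_div, le_div_iff₀ h1us]
      nlinarith [sq_nonneg (u * s)]
    have : 1 + α * s = 1 - u * s := by rw [hu]; ring
    calc 1 + α * s = 1 - u * s := this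
      _ ≤ (1 + u * s)⁻¹ := h4
      _ ≤ ((1 + s) ^ u)⁻¹ := h3
  -- multiply by a^α
  have hApos : (0:ℝ) < a ^ α := Real.rpow_pos_of_pos ha α
  have hprod : a ^ α * (1 + α * s) ≤ b ^ α := by
    have := mul_le_mul_of_nonneg_left hkey hApos.le
    have hmul : a ^ α * (1 + s) ^ α = b ^ α := by
      rw [← Real.mul_rpow ha.le h1s.le]
      congr 1
      field_simp [hs]
      rw [hs, show (1:ℝ) + (b / a - 1) = b / a by ring]; field_simp
    linarith [hmul ▸ this]
  have hsub : a ^ (α - 1) = a ^ α / a := Real.rpow_sub_one ha.ne' α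
  rw [hsub]
  have : a ^ α * (1 + α * s) = a ^ α + α * (a ^ α / a) * (b - a) := by
    rw [hs]; field_simp
  have h5 : u * (a ^ α / a * (a - b)) = α * (a ^ α / a) * (b - a) := by rw [hu]; ring
  have h6 : a ^ α + α * (a ^ α / a) * (b - a) ≤ b ^ α := by rw [← this]; exact hprod
  rw [h5]
  linarith

/-- Statement 16 (sublinear rate, case `θ ∈ [0,1/2)`): with
`φ(t) = (C/(1-2θ)) t^{2θ-1}` and the recursion
`R_{k+1}^{2θ-2}(R_k - R_{k+1}) ≥ β_{k+1}` for positive `β_k ≤ β̄`, there is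
`c > 0` with `φ(R_{k+1}) - φ(R_k) ≥ c β_{k+1}` for `k ≥ k₀`, and hence
`R_{k+1} ≤ D (∑_{n=k₀}^k β_{n+1})^{-1/(1-2θ)}` for some `D > 0`. -/
theorem kl_sublinear_rate
    (θ C : ℝ) (hθ : θ ∈ Set.Ico (0 : ℝ) (1 / 2)) (hC : 0 < C)
    (φ : ℝ → ℝ) (hφ : ∀ t : ℝ, 0 < t → φ t = C / (1 - 2 * θ) * t ^ (2 * θ - 1))
    (R β : ℕ → ℝ) (k₀ : ℕ) (βbar : ℝ)
    (hRpos : ∀ k, 0 < R k) (hmono : ∀ k, R (k + 1) ≤ R k)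
    (hβpos : ∀ k, 0 < β k) (hβle : ∀ k, β k ≤ βbar)
    (hrec : ∀ k, k₀ ≤ k → β (k + 1) ≤ R (k + 1) ^ (2 * θ - 2) * (R k - R (k + 1))) :
    ∃ c : ℝ, 0 < c ∧ (∀ k, k₀ ≤ k → c * β (k + 1) ≤ φ (R (k + 1)) - φ (R k)) ∧
      ∃ D : ℝ, 0 < D ∧ ∀ k, k₀ ≤ k →
        R (k + 1) ≤ D * (∑ n ∈ Finset.Icc k₀ k, β (n + 1)) ^ (-(1 / (1 - 2 * θ))) := by
  obtain ⟨hθ0, hθh⟩ := hθ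
  set α : ℝ := 2 * θ - 1 with hα
  have hα0 : α < 0 := by rw [hα]; linarith
  have hα1 : -1 ≤ α := by rw [hα]; linarith
  have h12 : (0:ℝ) < 1 - 2 * θ := by linarith
  have hCdiv : (0:ℝ) < C / (1 - 2 * θ) := div_pos hC h12
  have hβbar : (0:ℝ) < βbar := lt_of_lt_of_le (hβpos 0) (hβle 0)
  have hR0 : ∀ k, R k ≤ R 0 := by
    intro k
    induction k with
    | zero => exact le_rfl
    | succ n ih => exact (hmono n).trans ih
  have e2 : (2:ℝ) * θ - 2 = α - 1 := by rw [hα]; ring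
  rw [show (2:ℝ) * θ - 2 = α - 1 from e2] at hrec
  -- constants
  have h2pos : (0:ℝ) < (2:ℝ) ^ (α - 1) := Real.rpow_pos_of_pos (by norm_num) _
  have h2neg : (1:ℝ) < (2:ℝ) ^ (-α) := by
    have := Real.rpow_lt_rpow_of_exponent_lt (by norm_num : (1:ℝ) < 2)
      (by linarith : (0:ℝ) < -α)
    simpa using this
  have hR0α : (0:ℝ) < R 0 ^ α := Real.rpow_pos_of_pos (hRpos 0) _
  set m : ℝ := C / (1 - 2 * θ) * (((2:ℝ) ^ (-α) - 1) * R 0 ^ α) with hm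
  have hmpos : 0 < m := by
    apply mul_pos hCdiv
    exact mul_pos (by linarith) hR0α
  set c : ℝ := min (C * (2:ℝ) ^ (α - 1)) (m / βbar) with hcdef
  have hcpos : 0 < c := lt_min (mul_pos hC h2pos) (div_pos hmpos hβbar)
  -- per-step estimate
  have hstep : ∀ k, k₀ ≤ k → c * β (k + 1) ≤ φ (R (k + 1)) - φ (R k) := by
    intro k hk
    have ha : 0 < R k := hRpos k
    have hb : 0 < R (k + 1) := hRpos (k + 1)
    have hba : R (k + 1) ≤ R k := hmono k
    have hab : 0 ≤ R k - R (k + 1) := by linarith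
    have hβb : β (k + 1) ≤ R (k + 1) ^ (α - 1) * (R k - R (k + 1)) := hrec k hk
    have hconv := rpow_convexity_neg hb hba hα1 hα0
    rw [hφ (R (k + 1)) hb, hφ (R k) ha]
    have hdiffeq : C / (1 - 2 * θ) * (R (k+1) ^ α) - C / (1 - 2 * θ) * (R k ^ α)
        = C / (1 - 2 * θ) * (R (k+1) ^ α - R k ^ α) := by ring
    rcases le_or_gt (R k / 2) (R (k + 1)) with hcase | hcase
    · -- Case A : R k / 2 ≤ R (k+1)
      have hA : R (k + 1) ^ (α - 1) ≤ R k ^ (α - 1) * ((2:ℝ) ^ (α - 1))⁻¹ := by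
        calc R (k + 1) ^ (α - 1) ≤ (R k / 2) ^ (α - 1) :=
              Real.rpow_le_rpow_of_nonpos (by linarith) hcase (by linarith)
          _ = R k ^ (α - 1) / (2:ℝ) ^ (α - 1) := Real.div_rpow ha.le (by norm_num) _
          _ = R k ^ (α - 1) * ((2:ℝ) ^ (α - 1))⁻¹ := div_eq_mul_inv _ _
      have hφdiff : C * (R k ^ (α - 1) * (R k - R (k + 1)))
          ≤ C / (1 - 2 * θ) * (R (k+1) ^ α - R k ^ α) := by
        have h7 := mul_le_mul_of_nonneg_left hconv hCdiv.le
        have h8 : C / (1 - 2 * θ) * (-α * (R k ^ (α - 1) * (R k - R (k + 1))))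
            = C * (R k ^ (α - 1) * (R k - R (k + 1))) := by
          have hneg : -α = 1 - 2 * θ := by rw [hα]; ring
          rw [hneg]
          field_simp
        linarith [h8 ▸ h7]
      have hchain : c * β (k + 1) ≤ C * (R k ^ (α - 1) * (R k - R (k + 1))) := by
        have t1 : c * β (k + 1) ≤ (C * (2:ℝ) ^ (α - 1)) * (R (k+1) ^ (α - 1) * (R k - R (k+1))) :=
          mul_le_mul (min_le_left _ _) hβb (hβpos _).le (mul_pos hC h2pos).le
        have t2 : (C * (2:ℝ) ^ (α - 1)) * (R (k+1) ^ (α - 1) * (R k - R (k+1)))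
            ≤ (C * (2:ℝ) ^ (α - 1)) * ((R k ^ (α - 1) * ((2:ℝ) ^ (α - 1))⁻¹) * (R k - R (k+1))) :=
          mul_le_mul_of_nonneg_left (mul_le_mul_of_nonneg_right hA hab)
            (mul_pos hC h2pos).le
        have t3 : (C * (2:ℝ) ^ (α - 1)) * ((R k ^ (α - 1) * ((2:ℝ) ^ (α - 1))⁻¹) * (R k - R (k+1)))
            = C * (R k ^ (α - 1) * (R k - R (k + 1))) := by
          field_simp
        linarith
      linarith [hdiffeq ▸ (hchain.trans hφdiff)]
    · -- Case B : R (k+1) < R k / 2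
      have hB1 : (R k / 2) ^ α ≤ R (k + 1) ^ α :=
        Real.rpow_le_rpow_of_nonpos hb hcase.le hα0.le
      have hB2 : (R k / 2) ^ α = R k ^ α * (2:ℝ) ^ (-α) := by
        rw [Real.div_rpow ha.le (by norm_num), Real.rpow_neg (by norm_num), div_eq_mul_inv]
      have hB3 : R 0 ^ α ≤ R k ^ α :=
        Real.rpow_le_rpow_of_nonpos ha (hR0 k) hα0.le
      have hakα : (0:ℝ) < R k ^ α := Real.rpow_pos_of_pos ha _
      have hB4 : ((2:ℝ) ^ (-α) - 1) * R 0 ^ α ≤ R (k+1) ^ α - R k ^ α := by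
        nlinarith [mul_nonneg (by linarith : (0:ℝ) ≤ (2:ℝ) ^ (-α) - 1)
          (by linarith : (0:ℝ) ≤ R k ^ α - R 0 ^ α)]
      have hB5 : m ≤ C / (1 - 2 * θ) * (R (k+1) ^ α - R k ^ α) := by
        rw [hm]
        exact mul_le_mul_of_nonneg_left hB4 hCdiv.le
      have hB6 : c * β (k + 1) ≤ m := by
        calc c * β (k + 1) ≤ (m / βbar) * β (k + 1) :=
              mul_le_mul_of_nonneg_right (min_le_right _ _) (hβpos _).le
          _ ≤ (m / βbar) * βbar :=
              mul_le_mul_of_nonneg_left (hβle _) (div_pos hmpos hβbar).le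
          _ = m := div_mul_cancel₀ _ hβbar.ne'
      linarith [hdiffeq ▸ (hB6.trans hB5)]
  refine ⟨c, hcpos, hstep, ?_⟩
  -- telescoping
  have htel : ∀ k, k₀ ≤ k →
      c * (∑ n ∈ Finset.Icc k₀ k, β (n + 1)) ≤ φ (R (k + 1)) - φ (R k₀) := by
    intro k hk
    induction k, hk using Nat.le_induction with
    | base =>
      rw [Finset.Icc_self, Finset.sum_singleton]
      exact hstep k₀ le_rfl
    | succ n hn ih =>
      rw [Finset.sum_Icc_succ_top (by omega : k₀ ≤ n + 1), mul_add]
      have := hstep (n + 1) (by omega)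
      linarith
  set K : ℝ := c * (1 - 2 * θ) / C with hK
  have hKpos : 0 < K := by
    apply div_pos (mul_pos hcpos h12) hC
  refine ⟨K ^ (α⁻¹), Real.rpow_pos_of_pos hKpos _, ?_⟩
  intro k hk
  set S : ℝ := ∑ n ∈ Finset.Icc k₀ k, β (n + 1) with hS
  have hSpos : 0 < S := Finset.sum_pos (fun i _ => hβpos _) (Finset.nonempty_Icc.mpr hk)
  have hφk₀ : 0 < φ (R k₀) := by
    rw [hφ (R k₀) (hRpos k₀)]
    exact mul_pos hCdiv (Real.rpow_pos_of_pos (hRpos k₀) _)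
  have h9 : c * S ≤ C / (1 - 2 * θ) * (R (k + 1) ^ α) := by
    have := htel k hk
    rw [hφ (R (k + 1)) (hRpos (k + 1))] at this
    linarith
  have h10 : K * S ≤ R (k + 1) ^ α := by
    have h10a := mul_le_mul_of_nonneg_right h9 (div_pos h12 hC).le
    calc K * S = c * S * ((1 - 2 * θ) / C) := by rw [hK]; ring
      _ ≤ (C / (1 - 2 * θ) * (R (k + 1) ^ α)) * ((1 - 2 * θ) / C) := h10a
      _ = R (k + 1) ^ α := by field_simp
  have h11 : (R (k + 1) ^ α) ^ (α⁻¹) ≤ (K * S) ^ (α⁻¹) :=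
    Real.rpow_le_rpow_of_nonpos (mul_pos hKpos hSpos) h10 (inv_nonpos.mpr hα0.le)
  have h12' : (R (k + 1) ^ α) ^ (α⁻¹) = R (k + 1) :=
    Real.rpow_rpow_inv (hRpos (k + 1)).le hα0.ne
  have h13 : (K * S) ^ (α⁻¹) = K ^ (α⁻¹) * S ^ (α⁻¹) :=
    Real.mul_rpow hKpos.le hSpos.le
  have hexp : -(1 / (1 - 2 * θ)) = α⁻¹ := by
    rw [hα, show (2:ℝ) * θ - 1 = -(1 - 2 * θ) by ring, inv_neg, one_div]
  rw [hexp]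
  calc R (k + 1) = (R (k + 1) ^ α) ^ (α⁻¹) := h12'.symm
    _ ≤ (K * S) ^ (α⁻¹) := h11
    _ = K ^ (α⁻¹) * S ^ (α⁻¹) := h13
end
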